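/- arXiv:2503.07296 — 2 statements merged into one kernel-verified Lean document; each statement's English description precedes it below -/
import Mathlib

section
/- Let M and Z be independent random variables, each exponentially distributed with means β and Nβ' respectively (β, β', N > 0). Then for any c > 0, P[MZ < c] = 1 - √(4c/(ββ'N)) · K₁(√(4c/(ββ'N))), where K₁ is the modified Bessel function of the second kind of order 1. -/
open MeasureTheory ProbabilityTheory Real Set

/-- The modified Bessel function of the second kind `K_ν(x)`, defined by its
integral representation `K_ν(x) = ∫₀^∞ exp(-x cosh t) cosh(ν t) dt`. -/
noncomputable def besselK (ν x : ℝ) : ℝ :=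
  ∫ t in Set.Ioi (0 : ℝ), Real.exp (-x * Real.cosh t) * Real.cosh (ν * t)


lemma cosh_quadratic_le (t : ℝ) : t^2 / 8 ≤ Real.cosh t := by
  have h1 := Real.add_one_le_exp (|t| / 2)
  have h2 : Real.exp |t| = (Real.exp (|t|/2))^2 := by
    rw [sq, ← Real.exp_add]; norm_num
  have h3 : Real.exp |t| ≤ Real.exp t + Real.exp (-t) := by
    rcases abs_cases t with ⟨h, _⟩ | ⟨h, _⟩ <;> rw [h] <;>
      [linarith [Real.exp_pos (-t)]; linarith [Real.exp_pos t]]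
  rw [Real.cosh_eq]
  have h4 : 0 ≤ |t| := abs_nonneg t
  nlinarith [sq_abs t]

lemma integrable_exp_mul_neg_cosh {z : ℝ} (hz : 0 < z) :
    Integrable fun t : ℝ => Real.exp t * Real.exp (-z * Real.cosh t) := by
  have hint := (integrable_exp_neg_mul_sq (show (0:ℝ) < z/16 by positivity)).const_mul
    (Real.exp (4/z))
  refine hint.mono' ?_ ?_
  · exact (Real.continuous_exp.mul ((Real.continuous_exp.comp
      ((continuous_const).mul Real.continuous_cosh)))).aestronglyMeasurable
  · filter_upwards with t
    rw [Real.norm_eq_abs, abs_of_pos (by positivity), ← Real.exp_add, ← Real.exp_add]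
    apply Real.exp_le_exp.2
    have h1 : t^2/8 ≤ Real.cosh t := cosh_quadratic_le t
    have h2 : |t| ≤ z/16 * t^2 + 4/z := by
      rw [← sub_nonneg]
      have he : z/16 * t^2 + 4/z - |t| = (z*|t|-8)^2/(16*z) := by
        field_simp; rw [← sq_abs t]; ring
      rw [he]; positivity
    nlinarith [le_abs_self t, hz]

lemma integral_line_eq_two_besselK {z : ℝ} (hz : 0 < z) :
    ∫ t : ℝ, Real.exp t * Real.exp (-z * Real.cosh t) = 2 * besselK 1 z := by
  have hF := integrable_exp_mul_neg_cosh hz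
  have hFneg : Integrable (fun t : ℝ => Real.exp (-t) * Real.exp (-z * Real.cosh t)) := by
    simpa [Real.cosh_neg] using hF.comp_neg
  rw [← intervalIntegral.integral_Iic_add_Ioi (hF.integrableOn) (hF.integrableOn)]
  have h1 : ∫ t in Iic (0:ℝ), Real.exp t * Real.exp (-z * Real.cosh t)
      = ∫ t in Ioi (0:ℝ), Real.exp (-t) * Real.exp (-z * Real.cosh t) := by
    rw [show (0:ℝ) = -0 by norm_num, ← integral_comp_neg_Iic]
    simp [Real.cosh_neg]
  rw [h1, ← integral_add (hFneg.integrableOn) (hF.integrableOn)]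
  rw [besselK, ← integral_const_mul]
  apply setIntegral_congr_fun measurableSet_Ioi
  intro t _
  simp only [Real.cosh_eq, one_mul]
  ring

lemma integral_bessel {d r : ℝ} (hd : 0 < d) (hr : 0 < r) :
    ∫ x in Ioi (0:ℝ), r * Real.exp (-(r * x) - d / x)
      = Real.sqrt (4*d*r) * besselK 1 (Real.sqrt (4*d*r)) := by
  set z : ℝ := Real.sqrt (4*d*r) with hzdef
  have hz : z = 2 * Real.sqrt d * Real.sqrt r := by
    rw [hzdef, show 4*d*r = (2 * Real.sqrt d * Real.sqrt r)^2 by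
      rw [mul_pow, mul_pow, sq_sqrt hd.le, sq_sqrt hr.le]; ring]
    exact Real.sqrt_sq (by positivity)
  have hzpos : 0 < z := by rw [hz]; positivity
  set s : ℝ := Real.sqrt d / Real.sqrt r with hsdef
  have hspos : 0 < s := by positivity
  have hrs : r * s = z / 2 := by
    rw [hsdef, hz]; field_simp
    linear_combination (-1 : ℝ) * Real.sq_sqrt hr.le
  have hds : d / s = z / 2 := by
    rw [hsdef, hz]; field_simp
    linear_combination (-1 : ℝ) * Real.sq_sqrt hd.le
  have himg : (fun t : ℝ => s * Real.exp t) '' univ = Ioi 0 := by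
    ext y
    simp only [image_univ, mem_range, mem_Ioi]
    constructor
    · rintro ⟨t, rfl⟩; positivity
    · intro hy; exact ⟨Real.log (y / s), by
        rw [Real.exp_log (by positivity)]; field_simp⟩
  have hderiv : ∀ x ∈ (univ : Set ℝ), HasDerivWithinAt (fun t => s * Real.exp t)
      (s * Real.exp x) univ x :=
    fun x _ => ((Real.hasDerivAt_exp x).const_mul s).hasDerivWithinAt
  have hinj : InjOn (fun t : ℝ => s * Real.exp t) univ := by
    intro a _ b _ h
    simpa using mul_left_cancel₀ (ne_of_gt hspos) h |> Real.exp_injective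
  calc ∫ x in Ioi (0:ℝ), r * Real.exp (-(r * x) - d / x)
      = ∫ t, |s * Real.exp t| • (r * Real.exp (-(r * (s * Real.exp t)) - d / (s * Real.exp t))) := by
        rw [← himg, integral_image_eq_integral_abs_deriv_smul MeasurableSet.univ hderiv hinj]
        simp
    _ = ∫ t, (z/2) * (Real.exp t * Real.exp (-z * Real.cosh t)) := by
        congr 1; funext t
        rw [abs_of_pos (by positivity), smul_eq_mul, Real.cosh_eq, ← Real.exp_add]
        rw [show -(r * (s * Real.exp t)) - d / (s * Real.exp t)
            = -((r*s) * Real.exp t) - (d/s) * Real.exp (-t) by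
          rw [Real.exp_neg]; field_simp, hrs, hds]
        rw [show t + -z * ((Real.exp t + Real.exp (-t))/2)
            = t + (-(z/2 * Real.exp t) - z/2 * Real.exp (-t)) by ring, Real.exp_add, ← hrs]
        ring
    _ = z * besselK 1 z := by
        rw [integral_const_mul, integral_line_eq_two_besselK hzpos]; ring

lemma expMeasure_Iio {r : ℝ} (hr : 0 < r) {t : ℝ} (ht : 0 ≤ t) :
    expMeasure r (Iio t) = ENNReal.ofReal (1 - Real.exp (-(r * t))) := by
  have : expMeasure r = volume.withDensity (exponentialPDF r) := rfl
  rw [this, withDensity_apply _ measurableSet_Iio, setLIntegral_congr Iio_ae_eq_Iic,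
    lintegral_exponentialPDF_eq_antiDeriv hr t, if_pos ht]

lemma expMeasure_ae_pos {r : ℝ} (hr : 0 < r) : ∀ᵐ x ∂(expMeasure r), x ∈ Ioi (0:ℝ) := by
  rw [ae_iff]
  have h0 : {x : ℝ | x ∉ Ioi (0:ℝ)} = Iic 0 := by ext x; simp [not_lt]
  rw [h0, show expMeasure r = volume.withDensity (exponentialPDF r) from rfl,
    withDensity_apply _ measurableSet_Iic, lintegral_exponentialPDF_eq_antiDeriv hr 0]
  simp

lemma prob_calc {r r' c : ℝ} (hr : 0 < r) (hr' : 0 < r') (hc : 0 < c) :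
    (((expMeasure r).prod (expMeasure r')) {p : ℝ × ℝ | p.1 * p.2 < c}).toReal
      = 1 - Real.sqrt (4*(r'*c)*r) * besselK 1 (Real.sqrt (4*(r'*c)*r)) := by
  haveI := isProbabilityMeasure_expMeasure hr
  haveI := isProbabilityMeasure_expMeasure hr'
  have hset : MeasurableSet {p : ℝ × ℝ | p.1 * p.2 < c} :=
    measurableSet_lt (measurable_fst.mul measurable_snd) measurable_const
  set d : ℝ := r' * c with hd
  have hdpos : 0 < d := mul_pos hr' hc
  have hpdfmeas : Measurable (exponentialPDF r) :=
    (measurable_exponentialPDFReal r).ennreal_ofReal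
  -- the real integrand and its properties
  set f : ℝ → ℝ := fun x => r * Real.exp (-(r * x)) * (1 - Real.exp (-(d / x))) with hf
  have hf_nonneg : ∀ x ∈ Ioi (0:ℝ), 0 ≤ f x := by
    intro x hx
    show 0 ≤ r * Real.exp (-(r * x)) * (1 - Real.exp (-(d / x)))
    have : Real.exp (-(d / x)) ≤ 1 := by
      rw [Real.exp_le_one_iff]
      have : 0 < d / x := div_pos hdpos hx
      linarith
    have h2 : (0:ℝ) ≤ r * Real.exp (-(r * x)) := by positivity
    nlinarith
  have hbase : IntegrableOn (fun x => r * Real.exp (-(r * x))) (Ioi (0:ℝ)) := by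
    simpa [neg_mul, IntegrableOn] using (exp_neg_integrableOn_Ioi 0 hr).const_mul r
  have hf_int : IntegrableOn f (Ioi (0:ℝ)) := by
    refine hbase.mono' ?_ ?_
    · exact (((measurable_const.mul ((measurable_id.const_mul r).neg.exp)).mul
        (measurable_const.sub (measurable_const.div measurable_id).neg.exp))).aestronglyMeasurable
    · rw [ae_restrict_iff' measurableSet_Ioi]
      refine ae_of_all _ fun x hx => ?_
      rw [Real.norm_eq_abs, abs_of_nonneg (hf_nonneg x hx)]
      show r * Real.exp (-(r * x)) * (1 - Real.exp (-(d / x))) ≤ r * Real.exp (-(r * x))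
      have h1 : Real.exp (-(d / x)) ≤ 1 := by
        rw [Real.exp_le_one_iff]; have : 0 < d / x := div_pos hdpos hx; linarith
      have h2 : (0:ℝ) ≤ Real.exp (-(d/x)) := (Real.exp_pos _).le
      have h3 : (0:ℝ) ≤ r * Real.exp (-(r * x)) := by positivity
      nlinarith
  have h2' : IntegrableOn (fun x => r * Real.exp (-(r * x) - d / x)) (Ioi (0:ℝ)) := by
    refine hbase.mono' ?_ ?_
    · exact ((measurable_const.mul
        (((measurable_id.const_mul r).neg.sub (measurable_const.div measurable_id)).exp))).aestronglyMeasurable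
    · rw [ae_restrict_iff' measurableSet_Ioi]
      refine ae_of_all _ fun x hx => ?_
      rw [Real.norm_eq_abs, abs_of_nonneg (by positivity)]
      have h4 : -(r * x) - d / x ≤ -(r * x) := by
        have : 0 < d / x := div_pos hdpos hx
        linarith
      exact mul_le_mul_of_nonneg_left (Real.exp_le_exp.2 h4) hr.le
  have hval : ∫ x in Ioi (0:ℝ), f x
      = 1 - Real.sqrt (4*d*r) * besselK 1 (Real.sqrt (4*d*r)) := by
    have hsplit : ∀ x ∈ Ioi (0:ℝ), f x
        = r * Real.exp (-(r * x)) - r * Real.exp (-(r * x) - d / x) := by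
      intro x _
      show r * Real.exp (-(r * x)) * (1 - Real.exp (-(d / x))) = _
      rw [sub_eq_add_neg (-(r*x)) (d/x), Real.exp_add]
      ring
    rw [setIntegral_congr_fun measurableSet_Ioi hsplit, integral_sub hbase h2',
      integral_bessel hdpos hr]
    congr 1
    have h5 : ∫ x in Ioi (0:ℝ), Real.exp (-(r * x)) = r⁻¹ := by
      have h6 := integral_comp_mul_left_Ioi (fun y => Real.exp (-y)) 0 hr
      simp only [mul_zero, integral_exp_neg_Ioi, neg_zero, Real.exp_zero, smul_eq_mul,
        mul_one] at h6
      exact h6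
    rw [integral_const_mul, h5, mul_inv_cancel₀ hr.ne']
  have hnn : 0 ≤ ∫ x in Ioi (0:ℝ), f x := setIntegral_nonneg measurableSet_Ioi hf_nonneg
  have key : (((expMeasure r).prod (expMeasure r')) {p : ℝ × ℝ | p.1 * p.2 < c})
      = ENNReal.ofReal (∫ x in Ioi (0:ℝ), f x) := by
    rw [Measure.prod_apply hset]
    have hrestrict : (expMeasure r).restrict (Ioi 0) = expMeasure r :=
      Measure.restrict_eq_self_of_ae_mem (expMeasure_ae_pos hr)
    rw [← hrestrict]
    have hstep1 : ∫⁻ x in Ioi (0:ℝ), expMeasure r' (Prod.mk x ⁻¹' {p : ℝ × ℝ | p.1 * p.2 < c})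
          ∂(expMeasure r)
        = ∫⁻ x in Ioi (0:ℝ), ENNReal.ofReal (1 - Real.exp (-(d / x))) ∂(expMeasure r) := by
      apply setLIntegral_congr_fun measurableSet_Ioi
      intro x hx
      dsimp only
      have hxpos : (0:ℝ) < x := hx
      have hpre : Prod.mk x ⁻¹' {p : ℝ × ℝ | p.1 * p.2 < c} = Iio (c / x) := by
        ext y; simp [Set.mem_Iio, lt_div_iff₀ hxpos, mul_comm]
      rw [hpre, expMeasure_Iio hr' (by positivity), show r' * (c / x) = d / x by
        rw [hd]; ring]
    rw [hstep1, show expMeasure r = volume.withDensity (exponentialPDF r) from rfl,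
      restrict_withDensity measurableSet_Ioi,
      lintegral_withDensity_eq_lintegral_mul _ hpdfmeas (g := fun x : ℝ => ENNReal.ofReal (1 - Real.exp (-(d / x))))
        ((measurable_const.sub
          ((measurable_const.div measurable_id').neg.exp)).ennreal_ofReal :
          Measurable fun x : ℝ => ENNReal.ofReal (1 - Real.exp (-(d / x))))]
    have hstep2 : ∫⁻ x in Ioi (0:ℝ),
          (exponentialPDF r * fun x => ENNReal.ofReal (1 - Real.exp (-(d / x)))) x
        = ∫⁻ x in Ioi (0:ℝ), ENNReal.ofReal (f x) := by
      apply setLIntegral_congr_fun measurableSet_Ioi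
      intro x hx
      have hxpos : (0:ℝ) < x := hx
      simp only [Pi.mul_apply]
      rw [exponentialPDF_of_nonneg hxpos.le, ← ENNReal.ofReal_mul (by positivity)]
    rw [hstep2, ← ofReal_integral_eq_lintegral_ofReal hf_int
      ((ae_restrict_iff' measurableSet_Ioi).2 (ae_of_all _ hf_nonneg))]
  rw [key, ENNReal.toReal_ofReal hnn, hval]
/-- If `M` and `Z` are independent exponentials with means `β` and `Nβ'`, then
`P[MZ < c] = 1 - √(4c/(ββ'N)) K₁(√(4c/(ββ'N)))`. -/
theorem prob_product_exponentials_lt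
    {Ω : Type*} [MeasurableSpace Ω] (μ : Measure Ω) [IsProbabilityMeasure μ]
    (β β' N c : ℝ) (hβ : 0 < β) (hβ' : 0 < β') (hN : 0 < N) (hc : 0 < c)
    (M Z : Ω → ℝ) (hMm : Measurable M) (hZm : Measurable Z)
    (hM : Measure.map M μ = expMeasure (1 / β))
    (hZ : Measure.map Z μ = expMeasure (1 / (N * β')))
    (hindep : IndepFun M Z μ) :
    (μ {ω | M ω * Z ω < c}).toReal
      = 1 - Real.sqrt (4 * c / (β * β' * N)) *
          besselK 1 (Real.sqrt (4 * c / (β * β' * N))) := by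
  have hr : 0 < 1 / β := by positivity
  have hr' : 0 < 1 / (N * β') := by positivity
  have hset : MeasurableSet {p : ℝ × ℝ | p.1 * p.2 < c} :=
    measurableSet_lt (measurable_fst.mul measurable_snd) measurable_const
  have hmap : μ.map (fun ω => (M ω, Z ω)) = (expMeasure (1/β)).prod (expMeasure (1/(N*β'))) := by
    rw [← hM, ← hZ]
    exact (indepFun_iff_map_prod_eq_prod_map_map hMm.aemeasurable hZm.aemeasurable).mp hindep
  have hμ : μ {ω | M ω * Z ω < c}
      = ((expMeasure (1/β)).prod (expMeasure (1/(N*β')))) {p : ℝ × ℝ | p.1 * p.2 < c} := by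
    rw [← hmap, Measure.map_apply (hMm.prodMk hZm) hset]
    rfl
  rw [hμ, prob_calc hr hr' hc,
    show 4 * (1 / (N * β') * c) * (1 / β) = 4 * c / (β * β' * N) by field_simp]
end

section
/- Let M be exponentially distributed with mean β_{pu}, and Z be Gamma-distributed with shape k₁ > 0 and scale θ₁ > 0, independent of M. Then for c > 0, P[MZ < c] = 1 - (2/Γ(k₁)) (c/(β_{pu}θ₁))^{k₁/2} K_{k₁}(2√(c/(β_{pu}θ₁))), where K_{k₁} is the modified Bessel function of the second kind of order k₁. -/
open MeasureTheory ProbabilityTheory Real Set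

lemma my_lintegral_image {s : Set ℝ} {f f' : ℝ → ℝ} (hs : MeasurableSet s)
    (hf' : ∀ x ∈ s, HasDerivWithinAt f (f' x) s x) (hf : InjOn f s) (g : ℝ → ENNReal) :
    ∫⁻ x in f '' s, g x = ∫⁻ x in s, ENNReal.ofReal |f' x| * g (f x) := by
  simpa only [ContinuousLinearMap.det_toSpanSingleton] using
    lintegral_image_eq_lintegral_abs_det_fderiv_mul volume hs
      (fun x hx => (hf' x hx).hasFDerivWithinAt) hf g

lemma my_lintegral_Iio_neg (g : ℝ → ENNReal) :
    ∫⁻ x in Iio (0:ℝ), g x = ∫⁻ x in Ioi (0:ℝ), g (-x) := by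
  have h := my_lintegral_image (s := Ioi (0:ℝ)) (f := fun x => -x) (f' := fun _ => (-1:ℝ))
    measurableSet_Ioi (fun x _ => (hasDerivAt_neg x).hasDerivWithinAt)
    (fun a _ b _ h => neg_injective h) g
  simpa [Set.image_neg_Ioi] using h

lemma my_image_mul_exp {s : ℝ} (hs : 0 < s) :
    (fun t : ℝ => s * Real.exp t) '' univ = Ioi (0:ℝ) := by
  ext x
  simp only [image_univ, mem_range, mem_Ioi]
  constructor
  · rintro ⟨t, rfl⟩; positivity
  · intro hx
    exact ⟨Real.log (x / s), by rw [Real.exp_log (by positivity)]; field_simp⟩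

lemma my_core (ν a θ : ℝ) (ha : 0 < a) (hθ : 0 < θ) :
    ∫⁻ z in Ioi (0:ℝ), ENNReal.ofReal (z ^ (ν-1) * Real.exp (-(a/z) - z/θ))
      = ENNReal.ofReal ((a*θ) ^ (ν/2)) *
        (2 * ∫⁻ t in Ioi (0:ℝ),
            ENNReal.ofReal (Real.exp (-(2*Real.sqrt (a/θ)) * Real.cosh t) * Real.cosh (ν * t))) := by
  set s : ℝ := Real.sqrt (a*θ) with hs_def
  set q : ℝ := Real.sqrt (a/θ) with hq_def
  have hs : 0 < s := Real.sqrt_pos.mpr (by positivity)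
  have hq : 0 < q := Real.sqrt_pos.mpr (by positivity)
  have hqs : q * s = a := by
    rw [hq_def, hs_def, ← Real.sqrt_mul (by positivity)]
    rw [show a/θ*(a*θ) = a^2 by field_simp]
    exact Real.sqrt_sq ha.le
  have hqθ : q * θ = s := by
    rw [hq_def, hs_def, show a*θ = a/θ*θ^2 by field_simp,
      Real.sqrt_mul (by positivity), Real.sqrt_sq hθ.le]
  -- change of variables z = s * exp t
  have himg := my_image_mul_exp hs
  have hsub := my_lintegral_image (s := (univ : Set ℝ)) (f := fun t => s * Real.exp t)
      (f' := fun t => s * Real.exp t) MeasurableSet.univ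
      (fun t _ => ((Real.hasDerivAt_exp t).const_mul s).hasDerivWithinAt)
      (fun t₁ _ t₂ _ h => by
        have := mul_left_cancel₀ hs.ne' h
        exact Real.exp_injective this)
      (fun z => ENNReal.ofReal (z ^ (ν-1) * Real.exp (-(a/z) - z/θ)))
  rw [himg] at hsub
  rw [hsub]
  -- pointwise simplification
  have key : ∀ t : ℝ,
      ENNReal.ofReal |s * Real.exp t| *
        ENNReal.ofReal ((s * Real.exp t) ^ (ν-1) *
          Real.exp (-(a/(s * Real.exp t)) - (s * Real.exp t)/θ))
      = ENNReal.ofReal (s ^ ν) * ENNReal.ofReal (Real.exp (ν*t - (2*q) * Real.cosh t)) := by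
    intro t
    have het : (0:ℝ) < Real.exp t := Real.exp_pos t
    rw [abs_of_pos (by positivity), ← ENNReal.ofReal_mul (by positivity),
      ← ENNReal.ofReal_mul (by positivity)]
    congr 1
    have h1 : (s * Real.exp t) ^ (ν-1) = s ^ (ν-1) * Real.exp (t*(ν-1)) := by
      rw [Real.mul_rpow hs.le het.le, Real.rpow_def_of_pos het, Real.log_exp]
    have h2 : a/(s * Real.exp t) = q * Real.exp (-t) := by
      rw [← hqs, Real.exp_neg]; field_simp
    have h3 : (s * Real.exp t)/θ = q * Real.exp t := by
      rw [← hqθ]; field_simp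
    rw [h1, h2, h3]
    have h4 : ν*t - (2*q) * Real.cosh t = (t + t*(ν-1)) + (-(q * Real.exp (-t)) - q * Real.exp t) := by
      rw [Real.cosh_eq]; ring
    rw [h4, Real.exp_add, Real.exp_add, show s ^ ν = s * s ^ (ν-1) by
      rw [show ν = 1 + (ν-1) by ring, Real.rpow_add hs, Real.rpow_one]; ring_nf]
    ring
  simp only [key]
  rw [Measure.restrict_univ, lintegral_const_mul' _ _ ENNReal.ofReal_ne_top]
  have hsν : s ^ ν = (a*θ) ^ (ν/2) := by
    rw [hs_def, Real.sqrt_eq_rpow, ← Real.rpow_mul (by positivity)]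
    congr 1; ring
  rw [hsν]
  congr 1
  -- now: ∫⁻ t, ofReal (exp (ν*t - 2q cosh t)) = 2 * ∫⁻ Ioi 0, ofReal (exp (-(2√(a/θ)) cosh t) * cosh (ν t))
  have hmeas : Measurable fun t : ℝ => ENNReal.ofReal (Real.exp (ν*t - (2*q)*Real.cosh t)) := by
    apply Measurable.ennreal_ofReal
    exact (Real.continuous_exp.comp (by continuity)).measurable
  rw [← lintegral_add_compl (fun t => ENNReal.ofReal (Real.exp (ν*t - (2*q)*Real.cosh t)))
    measurableSet_Ioi, compl_Ioi,
    setLIntegral_congr (Filter.EventuallyEq.symm Iio_ae_eq_Iic), my_lintegral_Iio_neg,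
    ← lintegral_add_left (by fun_prop)]
  have hre : ∀ t : ℝ, Real.exp (ν*t - (2*q)*Real.cosh t) + Real.exp (ν*(-t) - (2*q)*Real.cosh (-t))
      = 2 * (Real.exp (-(2*q) * Real.cosh t) * Real.cosh (ν*t)) := by
    intro t
    rw [Real.cosh_neg, Real.cosh_eq (ν*t),
      show ν*t - (2*q)*Real.cosh t = ν*t + (-((2*q)*Real.cosh t)) by ring,
      show ν*(-t) - (2*q)*Real.cosh t = (-(ν*t)) + (-((2*q)*Real.cosh t)) by ring,
      Real.exp_add, Real.exp_add, show -(2*q)*Real.cosh t = -((2*q)*Real.cosh t) by ring]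
    ring
  have hpt : ∀ t : ℝ,
      ENNReal.ofReal (Real.exp (ν*t - (2*q)*Real.cosh t))
        + ENNReal.ofReal (Real.exp (ν*(-t) - (2*q)*Real.cosh (-t)))
      = 2 * ENNReal.ofReal (Real.exp (-(2*q) * Real.cosh t) * Real.cosh (ν*t)) := by
    intro t
    rw [← ENNReal.ofReal_add (by positivity) (by positivity), hre t,
      show ((2:ENNReal)) = ENNReal.ofReal (2:ℝ) by norm_num,
      ← ENNReal.ofReal_mul (by norm_num)]
  simp only [hpt]
  rw [lintegral_const_mul' _ _ (by norm_num)]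

lemma my_besselK_eq_toReal (ν x : ℝ) :
    besselK ν x = (∫⁻ t in Ioi (0:ℝ),
        ENNReal.ofReal (Real.exp (-x * Real.cosh t) * Real.cosh (ν * t))).toReal := by
  rw [besselK, integral_eq_lintegral_of_nonneg_ae]
  · exact ae_of_all _ fun t => by positivity
  · exact ((Real.continuous_exp.comp (by continuity)).mul
      (Real.continuous_cosh.comp (by continuity))).aestronglyMeasurable

lemma my_vanish_Iic (g : ℝ → ENNReal) (k r : ℝ) :
    ∫⁻ z in Iic (0:ℝ), gammaPDF k r z * g z = 0 := by
  rw [setLIntegral_congr (Filter.EventuallyEq.symm Iio_ae_eq_Iic),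
    setLIntegral_congr_fun measurableSet_Iio (fun z (hz : z < 0) => by
      rw [gammaPDF_of_neg hz, zero_mul])]
  simp

lemma my_gamma_Ioi_one {k r : ℝ} (hk : 0 < k) (hr : 0 < r) :
    ∫⁻ z in Ioi (0:ℝ), gammaPDF k r z = 1 := by
  have h := lintegral_gammaPDF_eq_one hk hr
  rw [← lintegral_add_compl (gammaPDF k r) measurableSet_Ioi (μ := volume), compl_Ioi] at h
  have h2 : ∫⁻ z in Iic (0:ℝ), gammaPDF k r z = 0 := by
    simpa using my_vanish_Iic (fun _ => 1) k r
  rwa [h2, add_zero] at h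

/-- If `M` is exponential with mean `β` and `Z` is Gamma with shape `k₁` and
scale `θ₁`, independent, then for `c > 0`,
`P[MZ < c] = 1 - (2/Γ(k₁)) (c/(βθ₁))^{k₁/2} K_{k₁}(2√(c/(βθ₁)))`. -/
theorem prob_exponential_gamma_product_lt
    {Ω : Type*} [MeasurableSpace Ω] (μ : Measure Ω) [IsProbabilityMeasure μ]
    (β k₁ θ₁ c : ℝ) (hβ : 0 < β) (hk₁ : 0 < k₁) (hθ₁ : 0 < θ₁) (hc : 0 < c)
    (M Z : Ω → ℝ) (hMm : Measurable M) (hZm : Measurable Z)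
    (hM : Measure.map M μ = expMeasure (1 / β))
    (hZ : Measure.map Z μ = gammaMeasure k₁ (1 / θ₁))
    (hindep : IndepFun M Z μ) :
    (μ {ω | M ω * Z ω < c}).toReal
      = 1 - (2 / Real.Gamma k₁) * (c / (β * θ₁)) ^ (k₁ / 2) *
          besselK k₁ (2 * Real.sqrt (c / (β * θ₁))) := by
  have hr : (0:ℝ) < 1/β := by positivity
  have hρ : (0:ℝ) < 1/θ₁ := by positivity
  haveI hPM : IsProbabilityMeasure (expMeasure (1/β)) := isProbabilityMeasure_expMeasure hr
  haveI hPZ : IsProbabilityMeasure (gammaMeasure k₁ (1/θ₁)) := isProbabilityMeasure_gammaMeasure hk₁ hρ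
  set a : ℝ := c/β with ha_def
  have ha : 0 < a := by positivity
  -- joint law
  have hmap : μ.map (fun ω => (Z ω, M ω)) = (gammaMeasure k₁ (1/θ₁)).prod (expMeasure (1/β)) := by
    rw [← hZ, ← hM]
    exact (indepFun_iff_map_prod_eq_prod_map_map hZm.aemeasurable hMm.aemeasurable).mp hindep.symm
  have hset : MeasurableSet {p : ℝ × ℝ | p.2 * p.1 < c} :=
    measurableSet_lt (measurable_snd.mul measurable_fst) measurable_const
  have h1 : μ {ω | M ω * Z ω < c}
      = (gammaMeasure k₁ (1/θ₁)).prod (expMeasure (1/β)) {p : ℝ × ℝ | p.2 * p.1 < c} := by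
    rw [← hmap, Measure.map_apply (hZm.prodMk hMm) hset]
    rfl
  have h2 : (gammaMeasure k₁ (1/θ₁)).prod (expMeasure (1/β)) {p : ℝ × ℝ | p.2 * p.1 < c}
      = ∫⁻ z, expMeasure (1/β) {m : ℝ | m * z < c} ∂(gammaMeasure k₁ (1/θ₁)) := by
    rw [Measure.prod_apply hset]
    rfl
  -- gamma gives no mass to Iic 0
  have hIic : gammaMeasure k₁ (1/θ₁) (Iic 0) = 0 := by
    rw [gammaMeasure, withDensity_apply _ measurableSet_Iic,
      ← setLIntegral_congr (μ := volume) (f := gammaPDF k₁ (1/θ₁)) Iio_ae_eq_Iic]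
    exact lintegral_gammaPDF_of_nonpos le_rfl
  have hae : ∀ᵐ z ∂(gammaMeasure k₁ (1/θ₁)), z ∈ Ioi (0:ℝ) := by
    have hset0 : {z : ℝ | ¬ z ∈ Ioi (0:ℝ)} = Iic 0 := by ext z; simp [not_lt]
    rw [ae_iff, hset0]; exact hIic
  -- exponential CDF at positive points
  have hexpCDF : ∀ x : ℝ, 0 < x →
      expMeasure (1/β) (Iio x) = ENNReal.ofReal (1 - Real.exp (-(1/β * x))) := by
    intro x hx
    have hsing : expMeasure (1/β) {x} = 0 := by
      rw [expMeasure, gammaMeasure, withDensity_apply _ (measurableSet_singleton x)]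
      exact setLIntegral_measure_zero _ _ (measure_singleton x)
    have h0 : expMeasure (1/β) (Iio x) = expMeasure (1/β) (Iic x) := by
      refine le_antisymm (measure_mono Iio_subset_Iic_self) ?_
      calc expMeasure (1/β) (Iic x)
          ≤ expMeasure (1/β) (Iio x) + expMeasure (1/β) {x} := by
            rw [← Set.Iio_union_right]; exact measure_union_le _ _
        _ = expMeasure (1/β) (Iio x) := by rw [hsing, add_zero]
    have h1 : expMeasure (1/β) (Iic x) = ∫⁻ y in Iic x, exponentialPDF (1/β) y := by
      rw [expMeasure, gammaMeasure, withDensity_apply _ measurableSet_Iic]; rfl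
    rw [h0, h1, lintegral_exponentialPDF_eq_antiDeriv hr x, if_pos hx.le]
  -- reduce to a Lebesgue integral against the gamma density
  have h3 : ∫⁻ z, expMeasure (1/β) {m : ℝ | m * z < c} ∂(gammaMeasure k₁ (1/θ₁))
      = ∫⁻ z, ENNReal.ofReal (1 - Real.exp (-(1/β * (c/z)))) ∂(gammaMeasure k₁ (1/θ₁)) := by
    apply lintegral_congr_ae
    filter_upwards [hae] with z hz
    have hz' : (0:ℝ) < z := hz
    have hsetz : {m : ℝ | m * z < c} = Iio (c/z) := by
      ext m; simp [lt_div_iff₀ hz']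
    rw [hsetz, hexpCDF (c/z) (by positivity)]
  have hmeas_e : Measurable fun z : ℝ => ENNReal.ofReal (1 - Real.exp (-(1/β * (c/z)))) := by
    fun_prop
  have h4 : ∫⁻ z, ENNReal.ofReal (1 - Real.exp (-(1/β * (c/z)))) ∂(gammaMeasure k₁ (1/θ₁))
      = ∫⁻ z, gammaPDF k₁ (1/θ₁) z * ENNReal.ofReal (1 - Real.exp (-(1/β * (c/z)))) := by
    rw [gammaMeasure, lintegral_withDensity_eq_lintegral_mul _
      (show Measurable (gammaPDF k₁ (1/θ₁)) from (measurable_gammaPDFReal _ _).ennreal_ofReal)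
      hmeas_e]
    rfl
  set G : ℝ → ENNReal := gammaPDF k₁ (1/θ₁) with hG_def
  set e : ℝ → ℝ := fun z => Real.exp (-(1/β * (c/z))) with he_def
  have hmeas_Ge : Measurable fun z => G z * ENNReal.ofReal (e z) :=
    ((measurable_gammaPDFReal _ _).ennreal_ofReal).mul (by fun_prop)
  have h5 : ∫⁻ z, G z * ENNReal.ofReal (1 - e z)
      = ∫⁻ z in Ioi (0:ℝ), G z * ENNReal.ofReal (1 - e z) := by
    rw [← lintegral_add_compl (fun z => G z * ENNReal.ofReal (1 - e z)) measurableSet_Ioi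
      (μ := volume), compl_Ioi, my_vanish_Iic, add_zero]
  have hgnn : ∀ z, 0 ≤ gammaPDFReal k₁ (1/θ₁) z := gammaPDFReal_nonneg hk₁ hρ
  have hC1 : (0:ℝ) < (1/θ₁)^k₁ / Real.Gamma k₁ :=
    div_pos (rpow_pos_of_pos hρ _) (Real.Gamma_pos_of_pos hk₁)
  have hsub_pt : ∀ z ∈ Ioi (0:ℝ), G z * ENNReal.ofReal (1 - e z)
      = G z - G z * ENNReal.ofReal (e z) := by
    intro z hz
    have hGz : G z = ENNReal.ofReal (gammaPDFReal k₁ (1/θ₁) z) := rfl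
    have hpe : 0 ≤ gammaPDFReal k₁ (1/θ₁) z * e z :=
      mul_nonneg (hgnn z) (Real.exp_pos _).le
    rw [hGz, ← ENNReal.ofReal_mul (hgnn z),
      show gammaPDFReal k₁ (1/θ₁) z * (1 - e z)
        = gammaPDFReal k₁ (1/θ₁) z - gammaPDFReal k₁ (1/θ₁) z * e z by ring,
      ENNReal.ofReal_sub _ hpe, ENNReal.ofReal_mul (hgnn z)]
  have hle : ∀ z : ℝ, G z * ENNReal.ofReal (e z) ≤ G z := by
    intro z
    rcases lt_or_ge z 0 with hz | hz
    · have : G z = 0 := gammaPDF_of_neg hz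
      rw [this, zero_mul]
    · calc G z * ENNReal.ofReal (e z) ≤ G z * 1 := by
            refine mul_le_mul_right (ENNReal.ofReal_le_one.2 ?_) _
            rw [he_def]
            exact Real.exp_le_one_iff.2 (by
              simp only [neg_nonpos]
              positivity)
        _ = G z := mul_one _
  have hGone : ∫⁻ z in Ioi (0:ℝ), G z = 1 := my_gamma_Ioi_one hk₁ hρ
  set I : ENNReal := ∫⁻ z in Ioi (0:ℝ), G z * ENNReal.ofReal (e z) with hI_def
  have hIle : I ≤ 1 := by
    rw [hI_def, ← hGone]; exact lintegral_mono hle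
  have h6 : ∫⁻ z in Ioi (0:ℝ), G z * ENNReal.ofReal (1 - e z) = 1 - I := by
    rw [setLIntegral_congr_fun measurableSet_Ioi hsub_pt,
      lintegral_sub hmeas_Ge (by rw [← hI_def]; exact (lt_of_le_of_lt hIle ENNReal.one_lt_top).ne)
        (ae_of_all _ hle), hGone, hI_def]
  have hP : μ {ω | M ω * Z ω < c} = 1 - I := by
    rw [h1, h2, h3, h4, h5, h6]
  -- rewrite I via the core substitution lemma
  have h7 : I = ENNReal.ofReal ((1/θ₁)^k₁ / Real.Gamma k₁) *
      ∫⁻ z in Ioi (0:ℝ), ENNReal.ofReal (z ^ (k₁-1) * Real.exp (-(a/z) - z/θ₁)) := by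
    rw [hI_def, ← lintegral_const_mul' _ _ ENNReal.ofReal_ne_top]
    refine setLIntegral_congr_fun measurableSet_Ioi (fun z hz => ?_)
    have hz' : (0:ℝ) < z := hz
    have hGz : G z = ENNReal.ofReal (gammaPDFReal k₁ (1/θ₁) z) := rfl
    rw [hGz, ← ENNReal.ofReal_mul (hgnn z), ← ENNReal.ofReal_mul hC1.le]
    congr 1
    rw [gammaPDFReal, if_pos hz'.le, he_def,
      show -(a/z) - z/θ₁ = (-(1/θ₁*z)) + (-(1/β*(c/z))) by rw [ha_def]; field_simp; ring,
      Real.exp_add]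
    ring
  have h8 := my_core k₁ a θ₁ ha hθ₁
  set B : ENNReal := ∫⁻ t in Ioi (0:ℝ),
      ENNReal.ofReal (Real.exp (-(2*Real.sqrt (a/θ₁)) * Real.cosh t) * Real.cosh (k₁ * t))
    with hB_def
  have hIB : I = ENNReal.ofReal ((1/θ₁)^k₁ / Real.Gamma k₁) *
      (ENNReal.ofReal ((a*θ₁)^(k₁/2)) * (2 * B)) := by rw [h7, h8]
  have hCne : ENNReal.ofReal ((1/θ₁)^k₁ / Real.Gamma k₁) ≠ 0 :=
    (ENNReal.ofReal_pos.mpr hC1).ne'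
  have hDne : ENNReal.ofReal ((a*θ₁)^(k₁/2)) ≠ 0 :=
    (ENNReal.ofReal_pos.mpr (rpow_pos_of_pos (by positivity) _)).ne'
  have hBne : B ≠ ⊤ := by
    intro hB
    have : I = ⊤ := by
      rw [hIB, hB, ENNReal.mul_top (by norm_num), ENNReal.mul_top hDne, ENNReal.mul_top hCne]
    rw [this] at hIle
    exact absurd hIle (by simp)
  -- conclude
  rw [hP, ENNReal.toReal_sub_of_le hIle ENNReal.one_ne_top, ENNReal.toReal_one, hIB,
    ENNReal.toReal_mul, ENNReal.toReal_mul, ENNReal.toReal_mul,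
    ENNReal.toReal_ofReal hC1.le, ENNReal.toReal_ofReal (rpow_pos_of_pos (by positivity) _).le,
    ENNReal.toReal_ofNat]
  have hBK : B.toReal = besselK k₁ (2*Real.sqrt (a/θ₁)) :=
    (my_besselK_eq_toReal k₁ (2*Real.sqrt (a/θ₁))).symm
  rw [hBK]
  have hfrac : a/θ₁ = c/(β*θ₁) := by rw [ha_def, div_div]
  rw [hfrac]
  have halg : ((1:ℝ)/θ₁)^k₁ * (a*θ₁)^(k₁/2) = (c/(β*θ₁))^(k₁/2) := by
    have e1 : ((1:ℝ)/θ₁)^k₁ = ((1/θ₁)*(1/θ₁))^(k₁/2) := by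
      rw [Real.mul_rpow (by positivity) (by positivity), ← Real.rpow_add hρ,
        show k₁/2 + k₁/2 = k₁ by ring]
    rw [← hfrac, e1, ← Real.mul_rpow (by positivity) (by positivity)]
    congr 1
    field_simp
  linear_combination (-(2 * besselK k₁ (2*Real.sqrt (c/(β*θ₁)))) / Real.Gamma k₁) * halg
end
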